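/- Let β ∈ ℂ with 0 < Re(β) < 1, and set φ_β(t) = ∫_{1}^{∞} β y^{-1-β} e^{-t y} dy for t > 0, where y^{-1-β} = exp((-1-β) log y). Then lim_{t → 0⁺} exp(-β · log t) · (1 - φ_β(t)) = Γ(1-β), where Γ is the complex Gamma function. -/

import Mathlib

open MeasureTheory

namespace Stmt3Aux

open Filter Set

noncomputable def F (β : ℂ) (u : ℝ) : ℂ := (u : ℂ) ^ (-β) * Complex.exp (-(u : ℂ))

lemma beta_ne {β : ℂ} (h0 : 0 < β.re) : β ≠ 0 := by
  intro h; rw [h] at h0; simp at h0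

lemma continuousOn_cpow (c : ℂ) :
    ContinuousOn (fun y : ℝ => (y : ℂ) ^ c) (Ioi (0 : ℝ)) := fun _ hx =>
  ContinuousAt.continuousWithinAt
    (Complex.continuousAt_ofReal_cpow_const _ _ (Or.inr (ne_of_gt hx)))

lemma continuous_texp (t : ℝ) :
    Continuous (fun y : ℝ => Complex.exp (-((t * y : ℝ) : ℂ))) :=
  Complex.continuous_exp.comp
    ((Complex.continuous_ofReal.comp (continuous_const.mul continuous_id)).neg)

lemma F_integrable {β : ℂ} (h1 : β.re < 1) :
    IntegrableOn (F β) (Ioi (0 : ℝ)) := by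
  have h : 0 < (1 - β).re := by simp [Complex.sub_re]; linarith
  refine (Complex.GammaIntegral_convergent h).congr_fun (fun x _ => ?_) measurableSet_Ioi
  have h2 : (1 : ℂ) - β - 1 = -β := by ring
  beta_reduce
  rw [h2, F, Complex.ofReal_exp, Complex.ofReal_neg, mul_comm]

lemma hasDerivAt_u {β : ℂ} (h0 : 0 < β.re) {x : ℝ} (hx : 0 < x) :
    HasDerivAt (fun y : ℝ => -(y : ℂ) ^ (-β)) (β * (x : ℂ) ^ (-1 - β)) x := by
  have hr : (-1 : ℂ) - β ≠ -1 := by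
    rw [Ne, sub_eq_self]; exact beta_ne h0
  have h := (hasDerivAt_ofReal_cpow_const' hx.ne' hr).const_mul β
  have hfun : (fun y : ℝ => β * ((y : ℂ) ^ (-1 - β + 1) / (-1 - β + 1)))
      = fun y : ℝ => -(y : ℂ) ^ (-β) := by
    funext y
    have h1 : (-1 : ℂ) - β + 1 = -β := by ring
    rw [h1]
    field_simp
    rw [neg_inj, div_eq_iff (beta_ne h0)]
    ring
  rwa [hfun] at h

lemma hasDerivAt_v {t : ℝ} {x : ℝ} :
    HasDerivAt (fun y : ℝ => Complex.exp (-((t * y : ℝ) : ℂ)))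
      (-(t : ℂ) * Complex.exp (-((t * x : ℝ) : ℂ))) x := by
  have h1 : HasDerivAt (fun y : ℝ => -(t * y)) (-t) x := by
    have := ((hasDerivAt_id x).const_mul t).neg; simp only [mul_one] at this; exact this
  have h2 := h1.ofReal_comp.cexp
  simp only [Complex.ofReal_neg] at h2
  convert h2 using 1
  push_cast
  ring

lemma norm_aux {β : ℂ} {t y : ℝ} (hy0 : 0 < y) :
    ‖(y : ℂ) ^ (-β) * Complex.exp (-((t * y : ℝ) : ℂ))‖
      = y ^ (-β.re) * Real.exp (-(t * y)) := by
  rw [norm_mul, Complex.norm_cpow_eq_rpow_re_of_pos hy0, Complex.norm_exp]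
  simp

lemma norm_F {β : ℂ} {x : ℝ} (hx : 0 < x) :
    ‖F β x‖ = x ^ (-β.re) * Real.exp (-x) := by
  rw [F, norm_mul, Complex.norm_cpow_eq_rpow_re_of_pos hx, Complex.norm_exp]
  simp

lemma integrable_uv' {β : ℂ} (h0 : 0 < β.re) {t : ℝ} (ht : 0 < t) :
    IntegrableOn
      (fun y : ℝ => -(y : ℂ) ^ (-β) * (-(t : ℂ) * Complex.exp (-((t * y : ℝ) : ℂ))))
      (Ioi (1 : ℝ)) := by
  have hg : IntegrableOn (fun y : ℝ => t * Real.exp (-(t * y))) (Ioi (1 : ℝ)) := by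
    simpa [neg_mul, IntegrableOn] using (exp_neg_integrableOn_Ioi 1 ht).const_mul t
  refine hg.mono' ?_ ?_
  · apply ContinuousOn.aestronglyMeasurable ?_ measurableSet_Ioi
    exact (((continuousOn_cpow (-β)).mono (Ioi_subset_Ioi zero_le_one)).neg).mul
      (continuous_const.mul (continuous_texp t)).continuousOn
  · rw [ae_restrict_iff' measurableSet_Ioi]
    filter_upwards with y hy
    have hy0 : (0 : ℝ) < y := lt_trans one_pos hy
    have heq : ‖-(y : ℂ) ^ (-β) * (-(t : ℂ) * Complex.exp (-((t * y : ℝ) : ℂ)))‖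
        = t * (y ^ (-β.re) * Real.exp (-(t * y))) := by
      rw [show (-(y : ℂ) ^ (-β) * (-(t : ℂ) * Complex.exp (-((t * y : ℝ) : ℂ))))
          = (t : ℂ) * ((y : ℂ) ^ (-β) * Complex.exp (-((t * y : ℝ) : ℂ))) by ring]
      rw [norm_mul, norm_aux hy0, Complex.norm_real, Real.norm_eq_abs, abs_of_pos ht]
    rw [heq]
    have h1 : y ^ (-β.re) ≤ 1 :=
      Real.rpow_le_one_of_one_le_of_nonpos hy.le (by linarith)
    have := mul_le_of_le_one_left (le_of_lt (Real.exp_pos (-(t * y)))) h1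
    exact mul_le_mul_of_nonneg_left this ht.le

lemma integrable_u'v {β : ℂ} (h0 : 0 < β.re) {t : ℝ} (ht : 0 < t) :
    IntegrableOn
      (fun y : ℝ => β * (y : ℂ) ^ (-1 - β) * Complex.exp (-((t * y : ℝ) : ℂ)))
      (Ioi (1 : ℝ)) := by
  have hg : IntegrableOn (fun y : ℝ => ‖β‖ * y ^ (-1 - β.re)) (Ioi (1 : ℝ)) :=
    (integrableOn_Ioi_rpow_of_lt (by linarith) one_pos).const_mul _
  refine hg.mono' ?_ ?_
  · apply ContinuousOn.aestronglyMeasurable ?_ measurableSet_Ioi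
    exact (continuousOn_const.mul
      ((continuousOn_cpow (-1 - β)).mono (Ioi_subset_Ioi zero_le_one))).mul
      (continuous_texp t).continuousOn
  · rw [ae_restrict_iff' measurableSet_Ioi]
    filter_upwards with y hy
    have hy0 : (0 : ℝ) < y := lt_trans one_pos hy
    have heq : ‖β * (y : ℂ) ^ (-1 - β) * Complex.exp (-((t * y : ℝ) : ℂ))‖
        = ‖β‖ * (y ^ (-1 - β.re) * Real.exp (-(t * y))) := by
      rw [mul_assoc, norm_mul]
      congr 1
      rw [norm_mul, Complex.norm_cpow_eq_rpow_re_of_pos hy0, Complex.norm_exp]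
      norm_num
    rw [heq]
    have h1 : Real.exp (-(t * y)) ≤ 1 := by
      rw [show (1:ℝ) = Real.exp 0 by simp]
      exact Real.exp_le_exp.2 (by nlinarith)
    have h2 : (0:ℝ) < y ^ (-1 - β.re) := Real.rpow_pos_of_pos hy0 _
    exact mul_le_mul_of_nonneg_left (mul_le_of_le_one_right h2.le h1) (norm_nonneg _)

lemma tendsto_uv_one (β : ℂ) (t : ℝ) :
    Tendsto (fun y : ℝ => -(y : ℂ) ^ (-β) * Complex.exp (-((t * y : ℝ) : ℂ)))
      (nhdsWithin 1 (Ioi 1)) (nhds (-Complex.exp (-(t : ℂ)))) := by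
  have hc : ContinuousAt
      (fun y : ℝ => -(y : ℂ) ^ (-β) * Complex.exp (-((t * y : ℝ) : ℂ))) 1 :=
    ((Complex.continuousAt_ofReal_cpow_const 1 (-β) (Or.inr one_ne_zero)).neg).mul
      (continuous_texp t).continuousAt
  have h := hc.continuousWithinAt (s := Ioi 1)
  simpa [ContinuousWithinAt, Complex.one_cpow] using h

lemma tendsto_uv_top {β : ℂ} (h0 : 0 < β.re) {t : ℝ} (ht : 0 < t) :
    Tendsto (fun y : ℝ => -(y : ℂ) ^ (-β) * Complex.exp (-((t * y : ℝ) : ℂ)))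
      atTop (nhds 0) := by
  apply squeeze_zero_norm' ?_ (tendsto_rpow_neg_atTop h0)
  filter_upwards [eventually_ge_atTop (1 : ℝ)] with y hy
  have hy0 : (0 : ℝ) < y := lt_of_lt_of_le one_pos hy
  rw [neg_mul, norm_neg, norm_aux hy0]
  have h1 : Real.exp (-(t * y)) ≤ 1 := by
    rw [show (1:ℝ) = Real.exp 0 by simp]
    exact Real.exp_le_exp.2 (by nlinarith)
  exact mul_le_of_le_one_right (Real.rpow_pos_of_pos hy0 _).le h1

lemma ibp {β : ℂ} (h0 : 0 < β.re) {t : ℝ} (ht : 0 < t) :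
    (∫ y in Ioi (1:ℝ), β * (y : ℂ) ^ (-1 - β) * Complex.exp (-((t * y : ℝ) : ℂ)))
      = Complex.exp (-(t : ℂ))
        - (t : ℂ) * ∫ y in Ioi (1:ℝ), (y : ℂ) ^ (-β) * Complex.exp (-((t * y : ℝ) : ℂ)) := by
  have H : (∫ y in Ioi (1:ℝ),
        (-(y : ℂ) ^ (-β)) * (-(t : ℂ) * Complex.exp (-((t * y : ℝ) : ℂ))))
      = 0 - (-Complex.exp (-(t : ℂ)))
        - ∫ y in Ioi (1:ℝ), (β * (y : ℂ) ^ (-1 - β)) * Complex.exp (-((t * y : ℝ) : ℂ)) :=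
    integral_Ioi_mul_deriv_eq_deriv_mul
      (fun x hx => hasDerivAt_u h0 (lt_trans one_pos hx))
      (fun x _ => hasDerivAt_v)
      (integrable_uv' h0 ht) (integrable_u'v h0 ht)
      (tendsto_uv_one β t) (tendsto_uv_top h0 ht)
  have e1 : (∫ y in Ioi (1:ℝ),
        (-(y : ℂ) ^ (-β)) * (-(t : ℂ) * Complex.exp (-((t * y : ℝ) : ℂ))))
      = (t : ℂ) * ∫ y in Ioi (1:ℝ), (y : ℂ) ^ (-β) * Complex.exp (-((t * y : ℝ) : ℂ)) := by
    rw [← integral_const_mul]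
    congr 1
    funext y
    ring
  rw [e1] at H
  linear_combination H

lemma subst {β : ℂ} {t : ℝ} (ht : 0 < t) :
    (∫ y in Ioi (1:ℝ), (y : ℂ) ^ (-β) * Complex.exp (-((t * y : ℝ) : ℂ)))
      = (t : ℂ) ^ β * ((t : ℂ))⁻¹ * ∫ u in Ioi t, F β u := by
  have htc : (t : ℂ) ≠ 0 := Complex.ofReal_ne_zero.2 ht.ne'
  have hbne : (t : ℂ) ^ β ≠ 0 := by
    intro hzero
    exact htc ((Complex.cpow_eq_zero_iff _ _).1 hzero).1
  have h := integral_comp_mul_left_Ioi (F β) 1 ht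
  rw [mul_one] at h
  have e : EqOn (fun y : ℝ => F β (t * y))
      (fun y : ℝ => (t : ℂ) ^ (-β) * ((y : ℂ) ^ (-β) * Complex.exp (-((t * y : ℝ) : ℂ))))
      (Ioi 1) := by
    intro y hy
    have hy0 : (0 : ℝ) ≤ y := (lt_trans one_pos hy).le
    simp only [F]
    rw [Complex.ofReal_mul, Complex.mul_cpow_ofReal_nonneg ht.le hy0]
    push_cast
    ring
  rw [setIntegral_congr_fun measurableSet_Ioi e, integral_const_mul, Complex.real_smul,
    Complex.ofReal_inv, Complex.cpow_neg] at h
  rw [mul_assoc, ← h, mul_inv_cancel_left₀ hbne]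

lemma gamma_eq {β : ℂ} (h1 : β.re < 1) :
    (∫ u in Ioi (0:ℝ), F β u) = Complex.Gamma (1 - β) := by
  rw [Complex.Gamma_eq_integral (by simp [Complex.sub_re]; linarith)]
  simp only [Complex.GammaIntegral]
  refine setIntegral_congr_fun measurableSet_Ioi fun x _ => ?_
  have h : (1 : ℂ) - β - 1 = -β := by ring
  rw [h, F, Complex.ofReal_exp, Complex.ofReal_neg, mul_comm]

lemma bnd_tendsto {β : ℂ} (h1 : β.re < 1) :
    Tendsto (fun t : ℝ => t ^ (1 - β.re)) (nhdsWithin 0 (Ioi 0)) (nhds 0) := by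
  have h := (Real.continuousAt_rpow_const 0 (1 - β.re) (Or.inr (by linarith))).tendsto
  simpa [Real.zero_rpow (show (1:ℝ) - β.re ≠ 0 by linarith)]
    using h.mono_left nhdsWithin_le_nhds

lemma tail_tendsto {β : ℂ} (h0 : 0 < β.re) (h1 : β.re < 1) :
    Tendsto (fun t : ℝ => ∫ u in Ioi t, F β u) (nhdsWithin 0 (Ioi 0))
      (nhds (∫ u in Ioi (0:ℝ), F β u)) := by
  have hInt := F_integrable (β := β) h1
  have key : ∀ t : ℝ, 0 < t →
      (∫ u in Ioi t, F β u)
        = (∫ u in Ioi (0:ℝ), F β u) - ∫ u in Ioc (0:ℝ) t, F β u := by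
    intro t ht
    have hsplit : (∫ u in Ioc (0:ℝ) t, F β u) + (∫ u in Ioi t, F β u)
        = ∫ u in Ioi (0:ℝ), F β u := by
      rw [← setIntegral_union (Ioc_disjoint_Ioi le_rfl) measurableSet_Ioi
        (hInt.mono_set Ioc_subset_Ioi_self) (hInt.mono_set (Ioi_subset_Ioi ht.le)),
        Ioc_union_Ioi_eq_Ioi ht.le]
    exact (eq_sub_of_add_eq' hsplit)
  have hsmall : Tendsto (fun t : ℝ => ∫ u in Ioc (0:ℝ) t, F β u)
      (nhdsWithin 0 (Ioi 0)) (nhds 0) := by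
    have hb : Tendsto (fun t : ℝ => t ^ (1 - β.re) / (1 - β.re))
        (nhdsWithin 0 (Ioi 0)) (nhds 0) := by
      simpa using (bnd_tendsto (β := β) h1).div_const (1 - β.re)
    apply squeeze_zero_norm' ?_ hb
    filter_upwards [self_mem_nhdsWithin] with t (ht : t ∈ Ioi (0:ℝ))
    replace ht : (0:ℝ) < t := ht
    have hi1 : IntegrableOn (fun u : ℝ => ‖F β u‖) (Ioc (0:ℝ) t) :=
      (hInt.mono_set Ioc_subset_Ioi_self).norm
    have hi2 : IntegrableOn (fun u : ℝ => u ^ (-β.re)) (Ioc (0:ℝ) t) := by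
      have := intervalIntegral.intervalIntegrable_rpow' (a := 0) (b := t)
        (show (-1:ℝ) < -β.re by linarith)
      rwa [intervalIntegrable_iff_integrableOn_Ioc_of_le ht.le] at this
    calc ‖∫ u in Ioc (0:ℝ) t, F β u‖ ≤ ∫ u in Ioc (0:ℝ) t, ‖F β u‖ :=
          norm_integral_le_integral_norm _
      _ ≤ ∫ u in Ioc (0:ℝ) t, u ^ (-β.re) := by
          apply setIntegral_mono_on hi1 hi2 measurableSet_Ioc
          intro x hx
          rw [norm_F hx.1]
          have hle : Real.exp (-x) ≤ 1 := by
            rw [show (1:ℝ) = Real.exp 0 by simp]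
            exact Real.exp_le_exp.2 (by linarith [hx.1])
          exact mul_le_of_le_one_right (Real.rpow_pos_of_pos hx.1 _).le hle
      _ = t ^ (1 - β.re) / (1 - β.re) := by
          rw [← intervalIntegral.integral_of_le ht.le,
            integral_rpow (Or.inl (show (-1:ℝ) < -β.re by linarith)),
            Real.zero_rpow (show -β.re + 1 ≠ 0 by linarith)]
          rw [show -β.re + 1 = 1 - β.re by ring]
          ring
  have hc : Tendsto (fun _ : ℝ => ∫ u in Ioi (0:ℝ), F β u)
      (nhdsWithin 0 (Ioi 0)) (nhds (∫ u in Ioi (0:ℝ), F β u)) := tendsto_const_nhds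
  have := hc.sub hsmall
  rw [sub_zero] at this
  apply this.congr'
  filter_upwards [self_mem_nhdsWithin] with t ht
  exact (key t ht).symm

lemma part1 {β : ℂ} (h0 : 0 < β.re) (h1 : β.re < 1) :
    Tendsto (fun t : ℝ => (t : ℂ) ^ (-β) * (1 - Complex.exp (-(t : ℂ))))
      (nhdsWithin 0 (Ioi 0)) (nhds 0) := by
  apply squeeze_zero_norm' ?_ (bnd_tendsto (β := β) h1)
  filter_upwards [self_mem_nhdsWithin] with t (ht : t ∈ Ioi (0:ℝ))
  replace ht : (0:ℝ) < t := ht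
  have e1 : ‖(t : ℂ) ^ (-β)‖ = t ^ (-β.re) := by
    rw [Complex.norm_cpow_eq_rpow_re_of_pos ht]
    simp
  have hexple : Real.exp (-t) ≤ 1 := by
    rw [show (1:ℝ) = Real.exp 0 by simp]
    exact Real.exp_le_exp.2 (by linarith)
  have e2 : ‖(1 : ℂ) - Complex.exp (-(t : ℂ))‖ = 1 - Real.exp (-t) := by
    rw [show (-(t : ℂ)) = ((-t : ℝ) : ℂ) by push_cast; ring, ← Complex.ofReal_exp,
      show (1 : ℂ) - ((Real.exp (-t) : ℝ) : ℂ) = (((1 - Real.exp (-t)) : ℝ) : ℂ) by push_cast; ring,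
      Complex.norm_real]
    rw [Real.norm_eq_abs, abs_of_nonneg (by linarith)]
  rw [norm_mul, e1, e2]
  have h3 : 1 - Real.exp (-t) ≤ t := by
    have := Real.add_one_le_exp (-t)
    linarith
  calc t ^ (-β.re) * (1 - Real.exp (-t)) ≤ t ^ (-β.re) * t :=
        mul_le_mul_of_nonneg_left h3 (Real.rpow_nonneg ht.le _)
    _ = t ^ (1 - β.re) := by
        rw [show (1:ℝ) - β.re = -β.re + 1 by ring, Real.rpow_add ht, Real.rpow_one]

lemma exp_log_eq {β : ℂ} {t : ℝ} (ht : 0 < t) :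
    Complex.exp (-β * (Real.log t : ℂ)) = (t : ℂ) ^ (-β) := by
  rw [Complex.cpow_def_of_ne_zero (Complex.ofReal_ne_zero.2 ht.ne'),
    Complex.ofReal_log ht.le]
  congr 1
  ring

end Stmt3Aux

/-- For complex `β` with `0 < Re β < 1`,
`exp(-β log t) (1 - φ_β(t)) → Γ(1-β)` as `t → 0⁺`, where
`φ_β(t) = ∫_1^∞ β y^{-1-β} e^{-ty} dy`. -/
theorem stmt3 (β : ℂ) (h0 : 0 < β.re) (h1 : β.re < 1) :
    Filter.Tendsto
      (fun t : ℝ => Complex.exp (-β * (Real.log t : ℂ)) *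
        (1 - ∫ y in Set.Ioi (1 : ℝ), β * (y : ℂ) ^ (-1 - β) * Complex.exp (-((t * y : ℝ) : ℂ))))
      (nhdsWithin 0 (Set.Ioi 0)) (nhds (Complex.Gamma (1 - β))) := by
  have hmain : ∀ t ∈ Set.Ioi (0:ℝ),
      (t : ℂ) ^ (-β) * (1 - Complex.exp (-(t : ℂ))) + (∫ u in Set.Ioi t, Stmt3Aux.F β u)
        = Complex.exp (-β * (Real.log t : ℂ)) *
          (1 - ∫ y in Set.Ioi (1 : ℝ),
            β * (y : ℂ) ^ (-1 - β) * Complex.exp (-((t * y : ℝ) : ℂ))) := by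
    intro t ht
    replace ht : (0:ℝ) < t := ht
    rw [Stmt3Aux.exp_log_eq ht, Stmt3Aux.ibp h0 ht, Stmt3Aux.subst ht]
    have htc : (t : ℂ) ≠ 0 := Complex.ofReal_ne_zero.2 ht.ne'
    have hb : (t : ℂ) ^ β ≠ 0 := by
      intro hzero
      exact htc ((Complex.cpow_eq_zero_iff _ _).1 hzero).1
    rw [Complex.cpow_neg]
    field_simp
    ring
  have hlim := (Stmt3Aux.part1 h0 h1).add (Stmt3Aux.tail_tendsto h0 h1)
  rw [zero_add, Stmt3Aux.gamma_eq h1] at hlim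
  apply hlim.congr'
  filter_upwards [self_mem_nhdsWithin] with t ht
  exact hmain t ht
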